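/- For the Grass model solution u(x) = ((α x + β)/A_g)^{1/3} with h = q/u, the pair (h, u) together with the stationary topography z⁰(x) = -(u(x)³ + 2gq)/(2gu(x)) + C is a steady solution of the Shallow Water equations with topography: ∂ₓ(h u) = 0 and ∂ₓ(h u² + g h²/2) + g h ∂ₓ z⁰ = 0 on I. -/

import Mathlib

theorem stmt_17 (Ag q g α β C : ℝ) (hAg : 0 < Ag) (hq : 0 < q) (hg : 0 < g)
    (u h z0 : ℝ → ℝ)
    (hu : ∀ x, u x = ((α * x + β) / Ag) ^ ((1 : ℝ) / 3))
    (hh : ∀ x, h x = q / u x)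
    (hz0 : ∀ x, z0 x = -((u x) ^ 3 + 2 * g * q) / (2 * g * u x) + C) :
    ∀ x ∈ {x : ℝ | 0 < α * x + β},
      deriv (fun y => h y * u y) x = 0 ∧
      deriv (fun y => h y * (u y) ^ 2 + g * (h y) ^ 2 / 2) x
        + g * h x * deriv z0 x = 0 := by
  intro x hx
  simp only [Set.mem_setOf_eq] at hx
  have hs : 0 < (α * x + β) / Ag := div_pos hx hAg
  have hux : 0 < u x := by rw [hu]; exact Real.rpow_pos_of_pos hs _
  -- derivative of u at x
  have hlin : HasDerivAt (fun y : ℝ => (α * y + β) / Ag) (α / Ag) x := by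
    have := (((hasDerivAt_id x).const_mul α).add_const β).div_const Ag
    simpa using this
  have hueq : u = fun y => ((α * y + β) / Ag) ^ ((1 : ℝ) / 3) := funext hu
  have hU : HasDerivAt u
      ((1 : ℝ) / 3 * ((α * x + β) / Ag) ^ ((1 : ℝ) / 3 - 1) * (α / Ag)) x := by
    rw [hueq]
    have := hlin.rpow_const (p := (1:ℝ)/3) (Or.inl hs.ne')
    convert this using 1
    ring
  set U := (1 : ℝ) / 3 * ((α * x + β) / Ag) ^ ((1 : ℝ) / 3 - 1) * (α / Ag) with hUdef
  -- eventually positivity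
  have hopen : IsOpen {y : ℝ | 0 < α * y + β} :=
    isOpen_lt continuous_const (by continuity)
  have hev : ∀ᶠ y in nhds x, 0 < α * y + β :=
    hopen.eventually_mem hx
  -- first equation
  have heq1 : (fun y => h y * u y) =ᶠ[nhds x] fun _ => q := by
    filter_upwards [hev] with y hy
    have huy : 0 < u y := by
      rw [hu]; exact Real.rpow_pos_of_pos (div_pos hy hAg) _
    rw [hh]
    field_simp
  constructor
  · rw [heq1.deriv_eq, deriv_const]
  -- second equation
  have hheq : h = fun y => q / u y := funext hh
  have hHd : HasDerivAt h ((0 * u x - q * U) / u x ^ 2) x := by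
    rw [hheq]
    exact (hasDerivAt_const x q).div hU hux.ne'
  have hz0eq : z0 = fun y => -((u y) ^ 3 + 2 * g * q) / (2 * g * u y) + C :=
    funext hz0
  have hnum : HasDerivAt (fun y => -((u y) ^ 3 + 2 * g * q))
      (-(3 * u x ^ 2 * U)) x := by
    have := ((hU.pow 3).add_const (2 * g * q)).neg
    exact this
  have hden : HasDerivAt (fun y => 2 * g * u y) (2 * g * U) x := hU.const_mul _
  have hdx : 2 * g * u x ≠ 0 := by positivity
  have hZ : HasDerivAt z0
      ((-(3 * u x ^ 2 * U) * (2 * g * u x) -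
        -((u x) ^ 3 + 2 * g * q) * (2 * g * U)) / (2 * g * u x) ^ 2) x := by
    rw [hz0eq]
    exact (hnum.div hden hdx).add_const C
  have hF : HasDerivAt (fun y => h y * (u y) ^ 2 + g * (h y) ^ 2 / 2)
      (((0 * u x - q * U) / u x ^ 2) * u x ^ 2 + h x * (2 * u x * U) +
        g * (2 * h x ^ 1 * ((0 * u x - q * U) / u x ^ 2)) / 2) x := by
    have h1 := hHd.mul (hU.pow 2)
    have h2 := ((hHd.pow 2).const_mul g).div_const 2
    have := h1.add h2
    refine this.congr_deriv ?_
    simp only [Pi.pow_apply, Nat.cast_ofNat]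
    ring
  rw [hF.deriv, hZ.deriv, hh]
  have hgx : g ≠ 0 := hg.ne'
  have huxne : u x ≠ 0 := hux.ne'
  field_simp
  ring
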